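/- The complex vector space of homogeneous polynomials of degree 4 in ℂ[z₀,z₁,z₂] invariant under the substitution d (f(λz₀,λ²z₁,λ⁴z₂) = f) is exactly the three-dimensional span of z₀³z₂, z₁³z₀ and z₂³z₁. Moreover, for each cube root of unity ζ, the subspace of such polynomials additionally satisfying f(z₂,z₀,z₁) = ζ·f(z₀,z₁,z₂) is one-dimensional, spanned by Q_ζ = z₀³z₂ + ζ²·z₂³z₁ + ζ·z₁³z₀; in particular, the degree-4 polynomials invariant under both d and the cyclic substitution τ are exactly the scalar multiples of the Klein quartic z₀³z₂ + z₂³z₁ + z₁³z₀. -/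

import Mathlib

open MvPolynomial

noncomputable def lam : ℂ := Complex.exp (2 * Real.pi * Complex.I / 7)

/-- The substitution `d : (z₀, z₁, z₂) ↦ (λz₀, λ²z₁, λ⁴z₂)` acting on polynomials. -/
noncomputable def dSub : MvPolynomial (Fin 3) ℂ →ₐ[ℂ] MvPolynomial (Fin 3) ℂ :=
  aeval ![C lam * X 0, C (lam ^ 2) * X 1, C (lam ^ 4) * X 2]

/-- The cyclic substitution `τ : (z₀, z₁, z₂) ↦ (z₂, z₀, z₁)` acting on polynomials. -/
noncomputable def tauSub : MvPolynomial (Fin 3) ℂ →ₐ[ℂ] MvPolynomial (Fin 3) ℂ :=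
  aeval ![X 2, X 0, X 1]

/-- `Q_ζ = z₀³z₂ + ζ²·z₂³z₁ + ζ·z₁³z₀`. -/
noncomputable def Qzeta (ζ : ℂ) : MvPolynomial (Fin 3) ℂ :=
  X 0 ^ 3 * X 2 + C (ζ ^ 2) * (X 2 ^ 3 * X 1) + C ζ * (X 1 ^ 3 * X 0)

noncomputable def e0 : Fin 3 →₀ ℕ := Finsupp.single 0 3 + Finsupp.single 2 1
noncomputable def e1 : Fin 3 →₀ ℕ := Finsupp.single 1 3 + Finsupp.single 0 1
noncomputable def e2 : Fin 3 →₀ ℕ := Finsupp.single 2 3 + Finsupp.single 1 1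

lemma M0_eq : (X 0 ^ 3 * X 2 : MvPolynomial (Fin 3) ℂ) = monomial e0 1 := by
  rw [← pow_one (X 2 : MvPolynomial (Fin 3) ℂ), X_pow_eq_monomial, X_pow_eq_monomial,
    monomial_mul, mul_one, e0]
lemma M1_eq : (X 1 ^ 3 * X 0 : MvPolynomial (Fin 3) ℂ) = monomial e1 1 := by
  rw [← pow_one (X 0 : MvPolynomial (Fin 3) ℂ), X_pow_eq_monomial, X_pow_eq_monomial,
    monomial_mul, mul_one, e1]
lemma M2_eq : (X 2 ^ 3 * X 1 : MvPolynomial (Fin 3) ℂ) = monomial e2 1 := by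
  rw [← pow_one (X 1 : MvPolynomial (Fin 3) ℂ), X_pow_eq_monomial, X_pow_eq_monomial,
    monomial_mul, mul_one, e2]

lemma e0_ne_e1 : e0 ≠ e1 := by intro h; have := DFunLike.congr_fun h 0; simp [e0, e1] at this
lemma e0_ne_e2 : e0 ≠ e2 := by intro h; have := DFunLike.congr_fun h 0; simp [e0, e2] at this
lemma e1_ne_e2 : e1 ≠ e2 := by intro h; have := DFunLike.congr_fun h 1; simp [e1, e2] at this

lemma enum (m : Fin 3 →₀ ℕ) (h4 : m 0 + m 1 + m 2 = 4)
    (h7 : 7 ∣ m 0 + 2 * m 1 + 4 * m 2) : m = e0 ∨ m = e1 ∨ m = e2 := by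
  have h : (m 0 = 3 ∧ m 1 = 0 ∧ m 2 = 1) ∨ (m 0 = 1 ∧ m 1 = 3 ∧ m 2 = 0) ∨
      (m 0 = 0 ∧ m 1 = 1 ∧ m 2 = 3) := by
    obtain ⟨k, hk⟩ := h7
    have hk2 : k ≤ 2 := by omega
    interval_cases k <;> omega
  rcases h with ⟨h0, h1, h2⟩ | ⟨h0, h1, h2⟩ | ⟨h0, h1, h2⟩
  · left; ext i; fin_cases i <;> simp_all [e0, Finsupp.single_apply]
  · right; left; ext i; fin_cases i <;> simp_all [e1, Finsupp.single_apply]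
  · right; right; ext i; fin_cases i <;> simp_all [e2, Finsupp.single_apply]

lemma lam_pow_eq_one_iff (n : ℕ) : lam ^ n = 1 ↔ 7 ∣ n := by
  rw [lam, ← Complex.exp_nat_mul, Complex.exp_eq_one_iff]
  have h2 : (2 * (Real.pi:ℂ) * Complex.I) ≠ 0 := by
    simp [Real.pi_ne_zero, Complex.I_ne_zero, Complex.ofReal_ne_zero]
  constructor
  · rintro ⟨k, hk⟩
    have h3 : (n : ℂ) * (2 * (Real.pi:ℂ) * Complex.I) = (7 * k) * (2 * (Real.pi:ℂ) * Complex.I) := by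
      field_simp at hk; linear_combination (2 * (Real.pi:ℂ) * Complex.I) * hk
    have h4 : (n : ℂ) = 7 * k := mul_right_cancel₀ h2 h3
    have : (n : ℤ) = 7 * k := by exact_mod_cast h4
    exact ⟨k.toNat, by omega⟩
  · rintro ⟨k, rfl⟩
    exact ⟨k, by push_cast; ring⟩

lemma lam_pow_seven : lam ^ 7 = 1 := (lam_pow_eq_one_iff 7).mpr dvd_rfl

lemma dSub_monomial (s : Fin 3 →₀ ℕ) (a : ℂ) :
    dSub (monomial s a) = C (lam ^ (s 0 + 2 * s 1 + 4 * s 2)) * monomial s a := by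
  rw [dSub, aeval_monomial, Finsupp.prod_fintype _ _ (fun i => pow_zero _), Fin.prod_univ_three]
  rw [monomial_eq, Finsupp.prod_fintype _ _ (fun i => pow_zero _), Fin.prod_univ_three]
  simp only [Matrix.cons_val_zero, Matrix.cons_val_one, Matrix.head_cons, Matrix.cons_val_two,
    Matrix.tail_cons, mul_pow, ← C_pow, ← pow_mul, algebraMap_eq]
  rw [pow_add, pow_add, C_mul, C_mul]
  ring

lemma coeff_dSub (f : MvPolynomial (Fin 3) ℂ) (m : Fin 3 →₀ ℕ) :
    coeff m (dSub f) = lam ^ (m 0 + 2 * m 1 + 4 * m 2) * coeff m f := by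
  conv_lhs => rw [f.as_sum, map_sum]
  rw [coeff_sum]
  simp only [dSub_monomial, C_mul_monomial, coeff_monomial]
  rw [Finset.sum_ite_eq' f.support m (fun m' => lam ^ (m' 0 + 2 * m' 1 + 4 * m' 2) * coeff m' f)]
  by_cases h : m ∈ f.support
  · rw [if_pos h]
  · rw [if_neg h, MvPolynomial.notMem_support_iff.mp h, mul_zero]

lemma mem_enum {f : MvPolynomial (Fin 3) ℂ} (hf : f.IsHomogeneous 4) (hd : dSub f = f)
    {m : Fin 3 →₀ ℕ} (hm : coeff m f ≠ 0) : m = e0 ∨ m = e1 ∨ m = e2 := by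
  have h4 : m 0 + m 1 + m 2 = 4 := by
    have := hf hm
    rw [Finsupp.weight_apply, Finsupp.sum_fintype, Fin.sum_univ_three] at this
    · simpa using this
    · intro; simp
  have heq : lam ^ (m 0 + 2 * m 1 + 4 * m 2) * coeff m f = coeff m f := by
    rw [← coeff_dSub, hd]
  have hone : lam ^ (m 0 + 2 * m 1 + 4 * m 2) = 1 := by
    have h5 : (lam ^ (m 0 + 2 * m 1 + 4 * m 2) - 1) * coeff m f = 0 := by
      linear_combination heq
    rcases mul_eq_zero.mp h5 with h | h
    · exact sub_eq_zero.mp h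
    · exact absurd h hm
  exact enum m h4 ((lam_pow_eq_one_iff _).mp hone)

lemma repr_eq {f : MvPolynomial (Fin 3) ℂ} (hf : f.IsHomogeneous 4) (hd : dSub f = f) :
    f = monomial e0 (coeff e0 f) + monomial e1 (coeff e1 f) + monomial e2 (coeff e2 f) := by
  ext m
  rw [coeff_add, coeff_add, coeff_monomial, coeff_monomial, coeff_monomial]
  by_cases h0 : m = e0
  · subst h0
    rw [if_pos rfl, if_neg (fun h => e0_ne_e1 h.symm), if_neg (fun h => e0_ne_e2 h.symm)]; ring
  by_cases h1 : m = e1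
  · subst h1; rw [if_neg e0_ne_e1, if_pos rfl, if_neg (fun h => e1_ne_e2 h.symm)]; ring
  by_cases h2 : m = e2
  · subst h2; rw [if_neg e0_ne_e2, if_neg e1_ne_e2, if_pos rfl]; ring
  · rw [if_neg (fun h => h0 h.symm), if_neg (fun h => h1 h.symm), if_neg (fun h => h2 h.symm)]
    by_contra hm
    rcases mem_enum hf hd (fun h => hm (by rw [h]; ring)) with h | h | h <;> tauto

lemma dSub_fix (s : Fin 3 →₀ ℕ) (h7 : 7 ∣ s 0 + 2 * s 1 + 4 * s 2) (a : ℂ) :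
    dSub (monomial s a) = monomial s a := by
  rw [dSub_monomial, (lam_pow_eq_one_iff _).mpr h7, map_one, one_mul]

lemma dSub_M0 : dSub (X 0 ^ 3 * X 2) = X 0 ^ 3 * X 2 := by
  rw [M0_eq]; exact dSub_fix _ (by simp [e0]) _
lemma dSub_M1 : dSub (X 1 ^ 3 * X 0) = X 1 ^ 3 * X 0 := by
  rw [M1_eq]; exact dSub_fix _ (by simp [e1]) _
lemma dSub_M2 : dSub (X 2 ^ 3 * X 1) = X 2 ^ 3 * X 1 := by
  rw [M2_eq]; exact dSub_fix _ (by simp [e2]) _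

lemma tau_M0 : tauSub (X 0 ^ 3 * X 2 : MvPolynomial (Fin 3) ℂ) = X 2 ^ 3 * X 1 := by simp [tauSub]
lemma tau_M1 : tauSub (X 1 ^ 3 * X 0 : MvPolynomial (Fin 3) ℂ) = X 0 ^ 3 * X 2 := by simp [tauSub]
lemma tau_M2 : tauSub (X 2 ^ 3 * X 1 : MvPolynomial (Fin 3) ℂ) = X 1 ^ 3 * X 0 := by simp [tauSub]

lemma homog_M0 : ((X 0 : MvPolynomial (Fin 3) ℂ) ^ 3 * X 2).IsHomogeneous 4 :=
  ((isHomogeneous_X ℂ 0).pow 3).mul (isHomogeneous_X ℂ 2)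
lemma homog_M1 : ((X 1 : MvPolynomial (Fin 3) ℂ) ^ 3 * X 0).IsHomogeneous 4 :=
  ((isHomogeneous_X ℂ 1).pow 3).mul (isHomogeneous_X ℂ 0)
lemma homog_M2 : ((X 2 : MvPolynomial (Fin 3) ℂ) ^ 3 * X 1).IsHomogeneous 4 :=
  ((isHomogeneous_X ℂ 2).pow 3).mul (isHomogeneous_X ℂ 1)

lemma monomial_e0_smul (a : ℂ) : monomial e0 a = a • (X 0 ^ 3 * X 2 : MvPolynomial (Fin 3) ℂ) := by
  rw [M0_eq, smul_monomial, smul_eq_mul, mul_one]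
lemma monomial_e1_smul (a : ℂ) : monomial e1 a = a • (X 1 ^ 3 * X 0 : MvPolynomial (Fin 3) ℂ) := by
  rw [M1_eq, smul_monomial, smul_eq_mul, mul_one]
lemma monomial_e2_smul (a : ℂ) : monomial e2 a = a • (X 2 ^ 3 * X 1 : MvPolynomial (Fin 3) ℂ) := by
  rw [M2_eq, smul_monomial, smul_eq_mul, mul_one]

lemma part1 : ({f : MvPolynomial (Fin 3) ℂ | f.IsHomogeneous 4 ∧ dSub f = f} =
    (Submodule.span ℂ ({X 0 ^ 3 * X 2, X 1 ^ 3 * X 0, X 2 ^ 3 * X 1} :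
      Set (MvPolynomial (Fin 3) ℂ)) : Set (MvPolynomial (Fin 3) ℂ))) := by
  ext f
  simp only [Set.mem_setOf_eq, SetLike.mem_coe]
  constructor
  · rintro ⟨hf, hd⟩
    rw [repr_eq hf hd, monomial_e0_smul, monomial_e1_smul, monomial_e2_smul]
    have h0 : (X 0 ^ 3 * X 2 : MvPolynomial (Fin 3) ℂ) ∈
        ({X 0 ^ 3 * X 2, X 1 ^ 3 * X 0, X 2 ^ 3 * X 1} : Set (MvPolynomial (Fin 3) ℂ)) := by
      simp
    have h1 : (X 1 ^ 3 * X 0 : MvPolynomial (Fin 3) ℂ) ∈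
        ({X 0 ^ 3 * X 2, X 1 ^ 3 * X 0, X 2 ^ 3 * X 1} : Set (MvPolynomial (Fin 3) ℂ)) := by
      simp
    have h2 : (X 2 ^ 3 * X 1 : MvPolynomial (Fin 3) ℂ) ∈
        ({X 0 ^ 3 * X 2, X 1 ^ 3 * X 0, X 2 ^ 3 * X 1} : Set (MvPolynomial (Fin 3) ℂ)) := by
      simp
    exact Submodule.add_mem _ (Submodule.add_mem _
      (Submodule.smul_mem _ _ (Submodule.subset_span h0))
      (Submodule.smul_mem _ _ (Submodule.subset_span h1)))
      (Submodule.smul_mem _ _ (Submodule.subset_span h2))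
  · intro hf
    refine Submodule.span_induction ?_ ?_ ?_ ?_ hf
    · rintro x hx
      rcases hx with rfl | rfl | rfl
      · exact ⟨homog_M0, dSub_M0⟩
      · exact ⟨homog_M1, dSub_M1⟩
      · exact ⟨homog_M2, dSub_M2⟩
    · exact ⟨isHomogeneous_zero _ _ _, map_zero _⟩
    · rintro x y _ _ ⟨hx1, hx2⟩ ⟨hy1, hy2⟩
      exact ⟨hx1.add hy1, by rw [map_add, hx2, hy2]⟩
    · rintro c x _ ⟨hx1, hx2⟩
      refine ⟨?_, by rw [map_smul, hx2]⟩
      rw [smul_eq_C_mul]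
      exact hx1.C_mul c

lemma tau_mon_e0 (a : ℂ) : tauSub (monomial e0 a) = monomial e2 a := by
  rw [monomial_e0_smul, map_smul, tau_M0, ← monomial_e2_smul]
lemma tau_mon_e1 (a : ℂ) : tauSub (monomial e1 a) = monomial e0 a := by
  rw [monomial_e1_smul, map_smul, tau_M1, ← monomial_e0_smul]
lemma tau_mon_e2 (a : ℂ) : tauSub (monomial e2 a) = monomial e1 a := by
  rw [monomial_e2_smul, map_smul, tau_M2, ← monomial_e1_smul]

lemma Qzeta_monomial (ζ : ℂ) :
    Qzeta ζ = monomial e0 1 + monomial e2 (ζ ^ 2) + monomial e1 ζ := by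
  rw [Qzeta, M0_eq, M1_eq, M2_eq, C_mul_monomial, C_mul_monomial, mul_one, mul_one]

lemma Qzeta_ne_zero (ζ : ℂ) : Qzeta ζ ≠ 0 := by
  intro h
  have := congrArg (coeff e0) h
  rw [Qzeta_monomial] at this
  simp [coeff_monomial, Ne.symm e0_ne_e1, Ne.symm e0_ne_e2] at this

lemma homog_Qzeta (ζ : ℂ) : (Qzeta ζ).IsHomogeneous 4 :=
  (homog_M0.add (homog_M2.C_mul _)).add (homog_M1.C_mul _)

lemma dSub_Qzeta (ζ : ℂ) : dSub (Qzeta ζ) = Qzeta ζ := by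
  rw [Qzeta, ← smul_eq_C_mul, ← smul_eq_C_mul, map_add, map_add, map_smul, map_smul,
    dSub_M0, dSub_M1, dSub_M2]

lemma tauSub_Qzeta (ζ : ℂ) (hζ : ζ ^ 3 = 1) : tauSub (Qzeta ζ) = C ζ * Qzeta ζ := by
  rw [Qzeta, ← smul_eq_C_mul, ← smul_eq_C_mul, map_add, map_add, map_smul, map_smul,
    tau_M0, tau_M1, tau_M2, ← smul_eq_C_mul]
  rw [smul_add, smul_add, smul_smul, smul_smul, ← pow_succ']
  rw [show (3 : ℕ) = 2 + 1 from rfl] at hζ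
  rw [hζ, one_smul, ← pow_two]
  abel

lemma part2 (ζ : ℂ) (hζ : ζ ^ 3 = 1) :
    ({f : MvPolynomial (Fin 3) ℂ | f.IsHomogeneous 4 ∧ dSub f = f ∧ tauSub f = C ζ * f} =
      (Submodule.span ℂ ({Qzeta ζ} : Set (MvPolynomial (Fin 3) ℂ)) :
        Set (MvPolynomial (Fin 3) ℂ))) := by
  ext f
  simp only [Set.mem_setOf_eq, SetLike.mem_coe, Submodule.mem_span_singleton]
  constructor
  · rintro ⟨hf, hd, ht⟩
    set a := coeff e0 f with ha
    set b := coeff e1 f with hbdef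
    set c := coeff e2 f with hcdef
    have hrepr := repr_eq hf hd
    rw [hrepr] at ht
    rw [map_add, map_add, tau_mon_e0, tau_mon_e1, tau_mon_e2, mul_add, mul_add,
      C_mul_monomial, C_mul_monomial, C_mul_monomial] at ht
    have hb : b = ζ * a := by
      have h := congrArg (coeff e0) ht
      simpa [coeff_monomial, Ne.symm e0_ne_e1, Ne.symm e0_ne_e2, e0_ne_e1, e0_ne_e2,
        e1_ne_e2, Ne.symm e1_ne_e2] using h
    have hc : c = ζ * b := by
      have h := congrArg (coeff e1) ht
      simpa [coeff_monomial, Ne.symm e0_ne_e1, Ne.symm e0_ne_e2, e0_ne_e1, e0_ne_e2,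
        e1_ne_e2, Ne.symm e1_ne_e2] using h
    refine ⟨a, ?_⟩
    rw [Qzeta_monomial, smul_add, smul_add, smul_monomial, smul_monomial, smul_monomial,
      smul_eq_mul, smul_eq_mul, smul_eq_mul, mul_one]
    rw [hrepr, ← ha, ← hbdef, ← hcdef, hb, hc, hb]
    rw [show a * ζ ^ 2 = ζ * (ζ * a) by ring, show a * ζ = ζ * a by ring]
    abel
  · rintro ⟨a, rfl⟩
    refine ⟨?_, ?_, ?_⟩
    · rw [smul_eq_C_mul]; exact (homog_Qzeta ζ).C_mul a
    · rw [map_smul, dSub_Qzeta]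
    · rw [map_smul, tauSub_Qzeta ζ hζ, mul_smul_comm]


/-- The homogeneous degree-4 polynomials invariant under `d` are exactly the span of
`z₀³z₂`, `z₁³z₀` and `z₂³z₁`; for each cube root of unity ζ the subspace of those that
additionally satisfy `f ∘ τ = ζ·f` is one-dimensional, spanned by
`Q_ζ = z₀³z₂ + ζ²·z₂³z₁ + ζ·z₁³z₀`; in particular the degree-4 polynomials invariant under
both `d` and `τ` are exactly the scalar multiples of the Klein quartic. -/
theorem degree_four_invariants :
    ({f : MvPolynomial (Fin 3) ℂ | f.IsHomogeneous 4 ∧ dSub f = f} =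
      (Submodule.span ℂ ({X 0 ^ 3 * X 2, X 1 ^ 3 * X 0, X 2 ^ 3 * X 1} :
        Set (MvPolynomial (Fin 3) ℂ)) : Set (MvPolynomial (Fin 3) ℂ))) ∧
    (∀ ζ : ℂ, ζ ^ 3 = 1 →
      ({f : MvPolynomial (Fin 3) ℂ | f.IsHomogeneous 4 ∧ dSub f = f ∧ tauSub f = C ζ * f} =
        (Submodule.span ℂ ({Qzeta ζ} : Set (MvPolynomial (Fin 3) ℂ)) :
          Set (MvPolynomial (Fin 3) ℂ)) ∧ Qzeta ζ ≠ 0)) ∧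
    ({f : MvPolynomial (Fin 3) ℂ | f.IsHomogeneous 4 ∧ dSub f = f ∧ tauSub f = f} =
      {f : MvPolynomial (Fin 3) ℂ | ∃ c : ℂ,
        f = C c * (X 0 ^ 3 * X 2 + X 2 ^ 3 * X 1 + X 1 ^ 3 * X 0)}) := by
  refine ⟨part1, fun ζ hζ => ⟨part2 ζ hζ, Qzeta_ne_zero ζ⟩, ?_⟩
  have h := part2 1 (by norm_num)
  have hQ1 : Qzeta 1 = X 0 ^ 3 * X 2 + X 2 ^ 3 * X 1 + X 1 ^ 3 * X 0 := by
    simp [Qzeta]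
  ext f
  simp only [Set.mem_setOf_eq]
  constructor
  · rintro ⟨hf, hd, ht⟩
    have hmem : f ∈ (Submodule.span ℂ ({Qzeta 1} : Set (MvPolynomial (Fin 3) ℂ)) :
        Set (MvPolynomial (Fin 3) ℂ)) := by
      rw [← h]; exact ⟨hf, hd, by rw [ht]; simp⟩
    rw [SetLike.mem_coe, Submodule.mem_span_singleton] at hmem
    obtain ⟨c, hc⟩ := hmem
    exact ⟨c, by rw [← hc, smul_eq_C_mul, hQ1]⟩
  · rintro ⟨c, rfl⟩
    have hmem : C c * (X 0 ^ 3 * X 2 + X 2 ^ 3 * X 1 + X 1 ^ 3 * X 0) ∈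
        (Submodule.span ℂ ({Qzeta 1} : Set (MvPolynomial (Fin 3) ℂ)) :
          Set (MvPolynomial (Fin 3) ℂ)) := by
      rw [SetLike.mem_coe, Submodule.mem_span_singleton]
      exact ⟨c, by rw [smul_eq_C_mul, hQ1]⟩
    rw [← h] at hmem
    obtain ⟨h1, h2, h3⟩ := hmem
    exact ⟨h1, h2, by simpa using h3⟩
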